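/- Let u_1, u_2 be unit vectors in ℝ²_{≥0} with angle θ between them, and let 𝒟 be uniform on {u_1, u_2}. For any c ≥ 1, β ∈ (0,1], and P ≥ 2, the optimal welfare W(c, β, 𝒟, P) equals β^{1/c}·cos(θ/2) if θ < 2·arccos(2^{−1/c}), and equals (β/2)^{1/c} if θ ≥ 2·arccos(2^{−1/c}). -/

import Mathlib

open MeasureTheory Finset Real
open scoped RealInnerProductSpace

/-- Probability that producer `j` wins a user `u`. -/
noncomputable def winProb {D P : ℕ} (p : Fin P → EuclideanSpace ℝ (Fin D))
    (j : Fin P) (u : EuclideanSpace ℝ (Fin D)) : ℝ :=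
  let A := Finset.univ.filter (fun j' : Fin P => ∀ j'' : Fin P, ⟪u, p j''⟫ ≤ ⟪u, p j'⟫)
  if j ∈ A then (A.card : ℝ)⁻¹ else 0

section Helpers

variable {D P : ℕ}

lemma dirac_integrable {α E : Type*} [MeasurableSpace α] [MeasurableSingletonClass α]
    [NormedAddCommGroup E] (f : α → E) (a : α) : Integrable f (Measure.dirac a) := by
  refine (integrable_const (f a)).congr ?_
  rw [Filter.EventuallyEq, MeasureTheory.ae_dirac_eq]
  exact Filter.eventually_pure.2 rfl

lemma winProb_eq (p : Fin P → EuclideanSpace ℝ (Fin D)) (j : Fin P) (u) :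
    winProb p j u =
      if j ∈ Finset.univ.filter (fun j' : Fin P => ∀ j'' : Fin P, ⟪u, p j''⟫ ≤ ⟪u, p j'⟫)
      then ((Finset.univ.filter
        (fun j' : Fin P => ∀ j'' : Fin P, ⟪u, p j''⟫ ≤ ⟪u, p j'⟫)).card : ℝ)⁻¹ else 0 := rfl

lemma winProb_nonneg (p : Fin P → EuclideanSpace ℝ (Fin D)) (j : Fin P) (u) :
    0 ≤ winProb p j u := by
  rw [winProb_eq]; split <;> positivity

lemma winProb_le_one (p : Fin P → EuclideanSpace ℝ (Fin D)) (j : Fin P) (u) :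
    winProb p j u ≤ 1 := by
  rw [winProb_eq]
  split
  · rename_i h
    have h1 : 1 ≤ (Finset.univ.filter
        (fun j' : Fin P => ∀ j'' : Fin P, ⟪u, p j''⟫ ≤ ⟪u, p j'⟫)).card :=
      Finset.card_pos.mpr ⟨j, h⟩
    have : (1:ℝ) ≤ ((Finset.univ.filter
        (fun j' : Fin P => ∀ j'' : Fin P, ⟪u, p j''⟫ ≤ ⟪u, p j'⟫)).card : ℝ) := by
      exact_mod_cast h1
    exact inv_le_one_of_one_le₀ this
  · norm_num

lemma winProb_pair_le (p : Fin P → EuclideanSpace ℝ (Fin D)) {j j' : Fin P} (hne : j ≠ j') (u) :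
    winProb p j u + winProb p j' u ≤ 1 := by
  rw [winProb_eq, winProb_eq]
  set A := Finset.univ.filter (fun a : Fin P => ∀ j'' : Fin P, ⟪u, p j''⟫ ≤ ⟪u, p a⟫) with hA
  by_cases h1 : j ∈ A <;> by_cases h2 : j' ∈ A <;> simp only [h1, h2, if_pos, if_neg,
    if_true, if_false, add_zero, zero_add]
  · have hcard : 2 ≤ A.card := Finset.one_lt_card.mpr ⟨j, h1, j', h2, hne⟩
    have hc : (2:ℝ) ≤ (A.card : ℝ) := by exact_mod_cast hcard
    have hpos : (0:ℝ) < (A.card : ℝ) := by linarith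
    have : (A.card : ℝ)⁻¹ ≤ 2⁻¹ := by
      apply inv_anti₀ (by norm_num) hc
    linarith
  · have h1' : 1 ≤ A.card := Finset.card_pos.mpr ⟨j, h1⟩
    have : (1:ℝ) ≤ (A.card : ℝ) := by exact_mod_cast h1'
    exact inv_le_one_of_one_le₀ this
  · have h1' : 1 ≤ A.card := Finset.card_pos.mpr ⟨j', h2⟩
    have : (1:ℝ) ≤ (A.card : ℝ) := by exact_mod_cast h1'
    exact inv_le_one_of_one_le₀ this
  · norm_num

lemma winProb_eq_one (p : Fin P → EuclideanSpace ℝ (Fin D)) (j : Fin P) (u)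
    (hj : ∀ j', j' ≠ j → ⟪u, p j'⟫ < ⟪u, p j⟫) : winProb p j u = 1 := by
  have hA : Finset.univ.filter (fun j' : Fin P => ∀ j'' : Fin P, ⟪u, p j''⟫ ≤ ⟪u, p j'⟫)
      = {j} := by
    ext a
    simp only [Finset.mem_filter, Finset.mem_univ, true_and, Finset.mem_singleton]
    constructor
    · intro h
      by_contra hne
      exact absurd (h j) (not_le.2 (hj a hne))
    · rintro rfl j''
      rcases eq_or_ne j'' a with rfl | h
      · exact le_rfl
      · exact (hj j'' h).le
  rw [winProb_eq, hA]
  simp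

lemma winProb_eq_zero (p : Fin P → EuclideanSpace ℝ (Fin D)) (j : Fin P) (u)
    (hj : ∃ j', ⟪u, p j⟫ < ⟪u, p j'⟫) : winProb p j u = 0 := by
  rw [winProb_eq, if_neg]
  simp only [Finset.mem_filter, Finset.mem_univ, true_and, not_forall, not_le]
  exact hj

lemma ciSup_eq_max {P : ℕ} [Nonempty (Fin P)] (f : Fin P → ℝ) (j : Fin P)
    (h : ∀ j', f j' ≤ f j) : (⨆ j', f j') = f j :=
  le_antisymm (ciSup_le h) (le_ciSup (Set.Finite.bddAbove (Set.finite_range f)) j)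

lemma two_rpow_bound {c x y : ℝ} (hc : 1 ≤ c) (hx : 0 ≤ x) (hy : 0 ≤ y) (hxy : x + y ≤ 1) :
    x ^ (1/c) + y ^ (1/c) ≤ 2 * (2:ℝ) ^ (-(1/c)) := by
  have hc0 : (0:ℝ) < c := lt_of_lt_of_le one_pos hc
  have key := Real.arith_mean_le_rpow_mean (Finset.univ : Finset (Fin 2))
      (fun _ => (1/2:ℝ)) (fun i => if i = 0 then x ^ (1/c) else y ^ (1/c))
      (fun i _ => by norm_num) (by norm_num [Fin.sum_univ_two])
      (fun i _ => by split <;> positivity) hc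
  simp only [Fin.sum_univ_two] at key
  norm_num at key
  rw [Real.rpow_inv_rpow hx hc0.ne', Real.rpow_inv_rpow hy hc0.ne'] at key
  have h2 : (1 / 2 * x + 1 / 2 * y) ^ c⁻¹ ≤ (1/2 : ℝ) ^ c⁻¹ := by
    apply Real.rpow_le_rpow (by linarith) (by linarith) (by positivity)
  have h4 : ((1:ℝ)/2) ^ c⁻¹ = (2:ℝ) ^ (-c⁻¹) := by
    rw [Real.rpow_neg (by norm_num), ← Real.inv_rpow (by norm_num)]
    norm_num
  simp only [one_div]
  linarith [key.trans h2, h4]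

end Helpers

/-- The optimal value `W(c, β, 𝒟, P)` of the constrained welfare program (5). -/
noncomputable def W (D P : ℕ) (c β : ℝ)
    (μ : Measure (EuclideanSpace ℝ (Fin D))) : ℝ :=
  sSup { w | ∃ p : Fin P → EuclideanSpace ℝ (Fin D),
    (∀ j i, 0 ≤ p j i) ∧
    (∀ j, ‖p j‖ ≤ β ^ (1 / c) * (∫ u, winProb p j u ∂μ) ^ (1 / c)) ∧
    w = ∫ u, ⨆ j, ⟪u, p j⟫ ∂μ }

set_option maxHeartbeats 2000000 in
/-- Proposition 5.4: two-user case in `ℝ²`. With `𝒟` uniform on unit vectors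
`u₁, u₂ ∈ ℝ²_{≥0}` at angle `θ`, the welfare is `β^{1/c} cos(θ/2)` if
`θ < 2 arccos(2^{−1/c})`, and `(β/2)^{1/c}` otherwise. -/
theorem W_two_users (P : ℕ) (hP : 2 ≤ P) (c β θ : ℝ)
    (hc : 1 ≤ c) (hβ : β ∈ Set.Ioc (0:ℝ) 1)
    (u₁ u₂ : EuclideanSpace ℝ (Fin 2))
    (hu₁ : ‖u₁‖ = 1) (hu₂ : ‖u₂‖ = 1)
    (hpos₁ : ∀ i, 0 ≤ u₁ i) (hpos₂ : ∀ i, 0 ≤ u₂ i)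
    (hθ : θ = Real.arccos ⟪u₁, u₂⟫)
    (μ : Measure (EuclideanSpace ℝ (Fin 2)))
    (hμ : μ = (2:ENNReal)⁻¹ • (Measure.dirac u₁ + Measure.dirac u₂)) :
    (θ < 2 * Real.arccos ((2:ℝ) ^ (-(1 / c))) →
      W 2 P c β μ = β ^ (1 / c) * Real.cos (θ / 2)) ∧
    (2 * Real.arccos ((2:ℝ) ^ (-(1 / c))) ≤ θ →
      W 2 P c β μ = (β / 2) ^ (1 / c)) := by
  obtain ⟨hβ0, hβ1⟩ := hβ
  have hc0 : (0:ℝ) < c := lt_of_lt_of_le one_pos hc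
  have ht0 : (0:ℝ) < 1/c := by positivity
  have ht1 : 1/c ≤ 1 := by rw [div_le_one hc0]; exact hc
  haveI : Nonempty (Fin P) := ⟨⟨0, by omega⟩⟩
  -- integral lemma
  have hint : ∀ f : EuclideanSpace ℝ (Fin 2) → ℝ, ∫ u, f u ∂μ = (f u₁ + f u₂)/2 := by
    intro f
    rw [hμ, integral_smul_measure,
      integral_add_measure (dirac_integrable f u₁) (dirac_integrable f u₂),
      integral_dirac, integral_dirac]
    simp only [smul_eq_mul, ENNReal.toReal_inv, ENNReal.toReal_ofNat]
    ring
  -- geometry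
  have hiu : |⟪u₁, u₂⟫| ≤ 1 := by
    have := abs_real_inner_le_norm u₁ u₂
    rwa [hu₁, hu₂, one_mul] at this
  have hcosθ : Real.cos θ = ⟪u₁, u₂⟫ := by
    rw [hθ]; exact Real.cos_arccos (neg_le_of_abs_le hiu) (le_of_abs_le hiu)
  have hθ0 : 0 ≤ θ := hθ ▸ Real.arccos_nonneg _
  have hθpi : θ ≤ π := hθ ▸ Real.arccos_le_pi _
  have hinner0 : 0 ≤ ⟪u₁, u₂⟫ := by
    rw [PiLp.inner_apply]
    apply Finset.sum_nonneg
    intro i _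
    simpa using mul_nonneg (hpos₂ i) (hpos₁ i)
  have hθpi2 : θ ≤ π/2 := hθ ▸ Real.arccos_le_pi_div_two.mpr hinner0
  have hcos2 : Real.cos (θ/2) ^ 2 = (1 + Real.cos θ)/2 := by
    rw [Real.cos_half (by linarith [Real.pi_pos]) hθpi]
    rw [Real.sq_sqrt (by nlinarith [neg_le_of_abs_le hiu, hcosθ])]
  have hcoshalf_pos : 0 < Real.cos (θ/2) := by
    apply Real.cos_pos_of_mem_Ioo
    constructor <;> [linarith [Real.pi_pos]; linarith [Real.pi_pos]]
  have hnorm12 : ‖u₁ + u₂‖ = 2 * Real.cos (θ/2) := by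
    have h1 : ‖u₁ + u₂‖^2 = 2 + 2*⟪u₁, u₂⟫ := by
      rw [norm_add_sq_real, hu₁, hu₂]; ring
    have h3 : ‖u₁ + u₂‖ = Real.sqrt (2 + 2*⟪u₁, u₂⟫) := by
      rw [← h1, Real.sqrt_sq (norm_nonneg _)]
    have h2 : (2 * Real.cos (θ/2))^2 = 2 + 2*⟪u₁, u₂⟫ := by
      rw [← hcosθ]; nlinarith [hcos2]
    rw [h3, ← h2, Real.sqrt_sq (by linarith)]
  have hnpos : 0 < ‖u₁ + u₂‖ := by rw [hnorm12]; linarith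
  set j0 : Fin P := ⟨0, by omega⟩ with hj0
  set j1 : Fin P := ⟨1, by omega⟩ with hj1
  have hj01 : j0 ≠ j1 := by simp [hj0, hj1, Fin.ext_iff]
  set S : Set ℝ := { w | ∃ p : Fin P → EuclideanSpace ℝ (Fin 2),
    (∀ j i, 0 ≤ p j i) ∧
    (∀ j, ‖p j‖ ≤ β ^ (1 / c) * (∫ u, winProb p j u ∂μ) ^ (1 / c)) ∧
    w = ∫ u, ⨆ j, ⟪u, p j⟫ ∂μ } with hSdef
  have hW : W 2 P c β μ = sSup S := rfl
  set Av : ℝ := β ^ (1/c) * Real.cos (θ/2) with hAv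
  set Bv : ℝ := (β/2) ^ (1/c) with hBv
  have hβt : 0 < β ^ (1/c) := Real.rpow_pos_of_pos hβ0 _
  -- upper bound
  have hub : ∀ w ∈ S, w ≤ max Av Bv := by
    rintro w ⟨p, hppos, hcon, rfl⟩
    obtain ⟨jm1, hjm1⟩ := Finite.exists_max (fun j => ⟪u₁, p j⟫)
    obtain ⟨jm2, hjm2⟩ := Finite.exists_max (fun j => ⟪u₂, p j⟫)
    have hF1 : (⨆ j, ⟪u₁, p j⟫) = ⟪u₁, p jm1⟫ := ciSup_eq_max _ jm1 hjm1
    have hF2 : (⨆ j, ⟪u₂, p j⟫) = ⟪u₂, p jm2⟫ := ciSup_eq_max _ jm2 hjm2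
    have hval : ∫ u, ⨆ j, ⟪u, p j⟫ ∂μ = (⟪u₁, p jm1⟫ + ⟪u₂, p jm2⟫)/2 := by
      rw [hint]; rw [hF1, hF2]
    have hq : ∀ j, ∫ u, winProb p j u ∂μ = (winProb p j u₁ + winProb p j u₂)/2 :=
      fun j => hint _
    have hq0 : ∀ j, 0 ≤ ∫ u, winProb p j u ∂μ := by
      intro j; rw [hq]
      linarith [winProb_nonneg p j u₁, winProb_nonneg p j u₂]
    have hq1 : ∀ j, ∫ u, winProb p j u ∂μ ≤ 1 := by
      intro j; rw [hq]
      linarith [winProb_le_one p j u₁, winProb_le_one p j u₂]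
    rw [hval]
    by_cases hjj : jm1 = jm2
    · -- concentration bound
      subst hjj
      have h1 : ⟪u₁, p jm1⟫ + ⟪u₂, p jm1⟫ = ⟪u₁ + u₂, p jm1⟫ := (inner_add_left _ _ _).symm
      have h2 : ⟪u₁ + u₂, p jm1⟫ ≤ ‖u₁ + u₂‖ * ‖p jm1‖ := real_inner_le_norm _ _
      have h3 : ‖p jm1‖ ≤ β ^ (1/c) := by
        calc ‖p jm1‖ ≤ β ^ (1/c) * (∫ u, winProb p jm1 u ∂μ) ^ (1/c) := hcon jm1
          _ ≤ β ^ (1/c) * 1 := by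
              gcongr
              exact Real.rpow_le_one (hq0 jm1) (hq1 jm1) ht0.le
          _ = β ^ (1/c) := mul_one _
      have : (⟪u₁, p jm1⟫ + ⟪u₂, p jm1⟫)/2 ≤ Av := by
        rw [h1, hAv]
        calc ⟪u₁ + u₂, p jm1⟫/2 ≤ (‖u₁ + u₂‖ * ‖p jm1‖)/2 := by linarith
          _ = Real.cos (θ/2) * ‖p jm1‖ := by rw [hnorm12]; ring
          _ ≤ Real.cos (θ/2) * β ^ (1/c) := by
              exact mul_le_mul_of_nonneg_left h3 hcoshalf_pos.le
          _ = β ^ (1/c) * Real.cos (θ/2) := mul_comm _ _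
      exact this.trans (le_max_left _ _)
    · -- specialization bound
      have hqsum : (∫ u, winProb p jm1 u ∂μ) + (∫ u, winProb p jm2 u ∂μ) ≤ 1 := by
        rw [hq, hq]
        linarith [winProb_pair_le p hjj u₁, winProb_pair_le p hjj u₂]
      have h1 : ⟪u₁, p jm1⟫ ≤ ‖p jm1‖ := by
        have := real_inner_le_norm u₁ (p jm1); rwa [hu₁, one_mul] at this
      have h2 : ⟪u₂, p jm2⟫ ≤ ‖p jm2‖ := by
        have := real_inner_le_norm u₂ (p jm2); rwa [hu₂, one_mul] at this
      have h3 := two_rpow_bound hc (hq0 jm1) (hq0 jm2) hqsum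
      have hBeq : Bv = β ^ (1/c) * (2:ℝ) ^ (-(1/c)) := by
        rw [hBv, Real.div_rpow hβ0.le (by norm_num), Real.rpow_neg (by norm_num)]
        ring
      have : (⟪u₁, p jm1⟫ + ⟪u₂, p jm2⟫)/2 ≤ Bv := by
        calc (⟪u₁, p jm1⟫ + ⟪u₂, p jm2⟫)/2 ≤ (‖p jm1‖ + ‖p jm2‖)/2 := by linarith
          _ ≤ (β ^ (1/c) * (∫ u, winProb p jm1 u ∂μ) ^ (1/c)
              + β ^ (1/c) * (∫ u, winProb p jm2 u ∂μ) ^ (1/c))/2 := by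
              linarith [hcon jm1, hcon jm2]
          _ = β ^ (1/c) * (((∫ u, winProb p jm1 u ∂μ) ^ (1/c)
              + (∫ u, winProb p jm2 u ∂μ) ^ (1/c))/2) := by ring
          _ ≤ β ^ (1/c) * ((2 * (2:ℝ) ^ (-(1/c)))/2) := by gcongr
          _ = Bv := by rw [hBeq]; ring
      exact this.trans (le_max_right _ _)
  -- concentration membership
  have hmemA : Av ∈ S := by
    set s : ℝ := β ^ (1/c) * ‖u₁ + u₂‖⁻¹ with hs
    have hspos : 0 < s := mul_pos hβt (inv_pos.mpr hnpos)
    set v : EuclideanSpace ℝ (Fin 2) := s • (u₁ + u₂) with hv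
    set p : Fin P → EuclideanSpace ℝ (Fin 2) := fun j => if j = j0 then v else 0 with hp
    have ep0 : p j0 = v := by simp [hp]
    have epo : ∀ j, j ≠ j0 → p j = 0 := by intro j h; simp [hp, h]
    have hiv1 : ⟪u₁, v⟫ = s * (1 + ⟪u₁, u₂⟫) := by
      rw [hv, real_inner_smul_right, inner_add_right, real_inner_self_eq_norm_sq, hu₁]
      norm_num
    have hiv2 : ⟪u₂, v⟫ = s * (1 + ⟪u₁, u₂⟫) := by
      rw [hv, real_inner_smul_right, inner_add_right, real_inner_self_eq_norm_sq, hu₂,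
        real_inner_comm u₂ u₁]
      ring
    have hvpos : 0 < s * (1 + ⟪u₁, u₂⟫) := by nlinarith
    have hu1v : 0 < ⟪u₁, v⟫ := by rw [hiv1]; exact hvpos
    have hu2v : 0 < ⟪u₂, v⟫ := by rw [hiv2]; exact hvpos
    have hone : ∀ u : EuclideanSpace ℝ (Fin 2), 0 < ⟪u, v⟫ → winProb p j0 u = 1 := by
      intro u hu
      apply winProb_eq_one
      intro j' hj'
      rw [epo j' hj', ep0, inner_zero_right]
      exact hu
    have hzero : ∀ u : EuclideanSpace ℝ (Fin 2), 0 < ⟪u, v⟫ →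
        ∀ j, j ≠ j0 → winProb p j u = 0 := by
      intro u hu j hj
      apply winProb_eq_zero
      exact ⟨j0, by rw [epo j hj, ep0, inner_zero_right]; exact hu⟩
    refine ⟨p, ?_, ?_, ?_⟩
    · intro j i
      by_cases hj : j = j0
      · subst hj
        rw [ep0, hv]
        simp only [PiLp.smul_apply, PiLp.add_apply, smul_eq_mul]
        exact mul_nonneg hspos.le (by linarith [hpos₁ i, hpos₂ i])
      · rw [epo j hj]
        simp
    · intro j
      by_cases hj : j = j0
      · subst hj
        have hqq : ∫ u, winProb p j0 u ∂μ = 1 := by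
          rw [hint, hone u₁ hu1v, hone u₂ hu2v]; norm_num
        rw [hqq, Real.one_rpow, mul_one, ep0, hv, norm_smul, Real.norm_eq_abs,
          abs_of_nonneg hspos.le, hs, mul_assoc, inv_mul_cancel₀ hnpos.ne', mul_one]
      · have hqq : ∫ u, winProb p j u ∂μ = 0 := by
          rw [hint, hzero u₁ hu1v j hj, hzero u₂ hu2v j hj]; norm_num
        rw [hqq, Real.zero_rpow ht0.ne', mul_zero, epo j hj, norm_zero]
    · rw [hint]
      have e1 : (⨆ j, ⟪u₁, p j⟫) = ⟪u₁, p j0⟫ := by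
        apply ciSup_eq_max
        intro j'
        by_cases hj : j' = j0
        · subst hj; exact le_rfl
        · rw [epo j' hj, inner_zero_right]; exact (ep0 ▸ hu1v).le
      have e2 : (⨆ j, ⟪u₂, p j⟫) = ⟪u₂, p j0⟫ := by
        apply ciSup_eq_max
        intro j'
        by_cases hj : j' = j0
        · subst hj; exact le_rfl
        · rw [epo j' hj, inner_zero_right]; exact (ep0 ▸ hu2v).le
      rw [e1, e2, ep0, hiv1, hiv2, hAv, hs]
      have hx : 1 + ⟪u₁, u₂⟫ = 2 * Real.cos (θ/2)^2 := by
        rw [← hcosθ]; linarith [hcos2]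
      rw [hx, hnorm12]
      field_simp
      ring
  -- specialization membership
  have hmemB : ⟪u₁, u₂⟫ < 1 → Bv ∈ S := by
    intro hlt
    set s : ℝ := (β/2) ^ (1/c) with hs
    have hspos : 0 < s := Real.rpow_pos_of_pos (by linarith) _
    set p : Fin P → EuclideanSpace ℝ (Fin 2) :=
      fun j => if j = j0 then s • u₁ else if j = j1 then s • u₂ else 0 with hp
    have ep0 : p j0 = s • u₁ := by simp [hp]
    have ep1 : p j1 = s • u₂ := by simp [hp, hj01.symm]
    have epo : ∀ j, j ≠ j0 → j ≠ j1 → p j = 0 := by intro j h h'; simp [hp, h, h']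
    have i11 : ⟪u₁, p j0⟫ = s := by
      rw [ep0, real_inner_smul_right, real_inner_self_eq_norm_sq, hu₁]; norm_num
    have i12 : ⟪u₁, p j1⟫ = s * ⟪u₁, u₂⟫ := by rw [ep1, real_inner_smul_right]
    have i21 : ⟪u₂, p j0⟫ = s * ⟪u₁, u₂⟫ := by
      rw [ep0, real_inner_smul_right, real_inner_comm]
    have i22 : ⟪u₂, p j1⟫ = s := by
      rw [ep1, real_inner_smul_right, real_inner_self_eq_norm_sq, hu₂]; norm_num
    have hlt' : s * ⟪u₁, u₂⟫ < s := by nlinarith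
    have hsprod : 0 ≤ s * ⟪u₁, u₂⟫ := mul_nonneg hspos.le hinner0
    have w11 : winProb p j0 u₁ = 1 := by
      apply winProb_eq_one
      intro j' hj'
      rw [i11]
      by_cases h1 : j' = j1
      · subst h1; rw [i12]; exact hlt'
      · rw [epo j' hj' h1, inner_zero_right]; exact hspos
    have w22 : winProb p j1 u₂ = 1 := by
      apply winProb_eq_one
      intro j' hj'
      rw [i22]
      by_cases h1 : j' = j0
      · subst h1; rw [i21]; exact hlt'
      · rw [epo j' h1 hj', inner_zero_right]; exact hspos
    have w1z : ∀ j, j ≠ j0 → winProb p j u₁ = 0 := by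
      intro j hj
      apply winProb_eq_zero
      refine ⟨j0, ?_⟩
      rw [i11]
      by_cases h1 : j = j1
      · subst h1; rw [i12]; exact hlt'
      · rw [epo j hj h1, inner_zero_right]; exact hspos
    have w2z : ∀ j, j ≠ j1 → winProb p j u₂ = 0 := by
      intro j hj
      apply winProb_eq_zero
      refine ⟨j1, ?_⟩
      rw [i22]
      by_cases h1 : j = j0
      · subst h1; rw [i21]; exact hlt'
      · rw [epo j h1 hj, inner_zero_right]; exact hspos
    have hhalf : β ^ (1/c) * ((1:ℝ)/2) ^ (1/c) = s := by
      rw [hs, ← Real.mul_rpow hβ0.le (by norm_num), mul_one_div]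
    refine ⟨p, ?_, ?_, ?_⟩
    · intro j i
      by_cases h0 : j = j0
      · subst h0
        rw [ep0]
        simp only [PiLp.smul_apply, smul_eq_mul]
        exact mul_nonneg hspos.le (hpos₁ i)
      · by_cases h1 : j = j1
        · subst h1
          rw [ep1]
          simp only [PiLp.smul_apply, smul_eq_mul]
          exact mul_nonneg hspos.le (hpos₂ i)
        · rw [epo j h0 h1]; simp
    · intro j
      by_cases h0 : j = j0
      · subst h0
        have hqq : ∫ u, winProb p j0 u ∂μ = 1/2 := by
          rw [hint, w11, w2z j0 hj01]; norm_num
        rw [hqq, ep0, norm_smul, Real.norm_eq_abs, abs_of_nonneg hspos.le, hu₁, mul_one,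
          hhalf]
      · by_cases h1 : j = j1
        · subst h1
          have hqq : ∫ u, winProb p j1 u ∂μ = 1/2 := by
            rw [hint, w1z j1 (Ne.symm hj01), w22]; norm_num
          rw [hqq, ep1, norm_smul, Real.norm_eq_abs, abs_of_nonneg hspos.le, hu₂, mul_one,
            hhalf]
        · have hqq : ∫ u, winProb p j u ∂μ = 0 := by
            rw [hint, w1z j h0, w2z j h1]; norm_num
          rw [hqq, Real.zero_rpow ht0.ne', mul_zero, epo j h0 h1, norm_zero]
    · rw [hint]
      have e1 : (⨆ j, ⟪u₁, p j⟫) = ⟪u₁, p j0⟫ := by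
        apply ciSup_eq_max
        intro j'
        rw [i11]
        by_cases h0 : j' = j0
        · subst h0; rw [i11]
        · by_cases h1 : j' = j1
          · subst h1; rw [i12]; exact hlt'.le
          · rw [epo j' h0 h1, inner_zero_right]; exact hspos.le
      have e2 : (⨆ j, ⟪u₂, p j⟫) = ⟪u₂, p j1⟫ := by
        apply ciSup_eq_max
        intro j'
        rw [i22]
        by_cases h1 : j' = j1
        · subst h1; rw [i22]
        · by_cases h0 : j' = j0
          · subst h0; rw [i21]; exact hlt'.le
          · rw [epo j' h0 h1, inner_zero_right]; exact hspos.le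
      rw [e1, e2, i11, i22, hBv, hs]
      ring
  -- threshold facts
  have h2t1 : (2:ℝ) ^ (-(1/c)) < 1 :=
    Real.rpow_lt_one_of_one_lt_of_neg (by norm_num) (by linarith)
  have h2tpos : (0:ℝ) < (2:ℝ) ^ (-(1/c)) := Real.rpow_pos_of_pos (by norm_num) _
  have hBeq : Bv = β ^ (1/c) * (2:ℝ) ^ (-(1/c)) := by
    rw [hBv, Real.div_rpow hβ0.le (by norm_num), Real.rpow_neg (by norm_num)]
    ring
  constructor
  · intro hreg
    have harc : θ/2 < Real.arccos ((2:ℝ) ^ (-(1/c))) := by linarith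
    have hcosgt : (2:ℝ) ^ (-(1/c)) < Real.cos (θ/2) := by
      have h := Real.cos_lt_cos_of_nonneg_of_le_pi (by linarith) (Real.arccos_le_pi _) harc
      rwa [Real.cos_arccos (by linarith) h2t1.le] at h
    have hBA : Bv ≤ Av := by
      rw [hBeq, hAv]
      exact mul_le_mul_of_nonneg_left hcosgt.le hβt.le
    rw [hW]
    exact IsGreatest.csSup_eq ⟨hmemA, fun w hw => (hub w hw).trans (max_le le_rfl hBA)⟩
  · intro hreg
    have harc : Real.arccos ((2:ℝ) ^ (-(1/c))) ≤ θ/2 := by linarith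
    have hcosle : Real.cos (θ/2) ≤ (2:ℝ) ^ (-(1/c)) := by
      have h := Real.cos_le_cos_of_nonneg_of_le_pi (Real.arccos_nonneg _)
        (by linarith [Real.pi_pos]) harc
      rwa [Real.cos_arccos (by linarith) h2t1.le] at h
    have hAB : Av ≤ Bv := by
      rw [hBeq, hAv]
      exact mul_le_mul_of_nonneg_left hcosle hβt.le
    have hθpos : 0 < θ := by
      have := Real.arccos_pos.mpr h2t1
      linarith
    have hlt : ⟪u₁, u₂⟫ < 1 := by
      rw [← hcosθ]
      have := Real.cos_lt_cos_of_nonneg_of_le_pi le_rfl hθpi hθpos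
      rwa [Real.cos_zero] at this
    rw [hW]
    exact IsGreatest.csSup_eq ⟨hmemB hlt, fun w hw => (hub w hw).trans (max_le hAB le_rfl)⟩
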